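/- For every natural number k ≥ 1, there exists a graph G with at least 2 vertices such that st_D(G) = k. -/

import Mathlib

open SimpleGraph

/-- The distinguishing number of a graph: the least `d` such that there is a vertex
labeling with `d` labels preserved only by the trivial automorphism. -/
noncomputable def distNum {V : Type*} (G : SimpleGraph V) : ℕ :=
  sInf {d : ℕ | ∃ f : V → Fin d, ∀ φ : G ≃g G, (∀ x, f (φ x) = f x) → ∀ x, φ x = x}

/-- The distinguishing stability of a graph: the minimum cardinality of a proper subset
`S` of the vertex set whose removal changes the distinguishing number. -/
noncomputable def stD {V : Type*} (G : SimpleGraph V) : ℕ :=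
  sInf {k : ℕ | ∃ S : Set V, S ≠ Set.univ ∧ S.ncard = k ∧
    distNum (G.induce Sᶜ) ≠ distNum G}

/-- The distinguishing bondage number of a graph: the minimum cardinality of a set
of edges whose removal changes the distinguishing number. -/
noncomputable def bD {V : Type*} (G : SimpleGraph V) : ℕ :=
  sInf {k : ℕ | ∃ F : Set (Sym2 V), F ⊆ G.edgeSet ∧ F.ncard = k ∧
    distNum (G.deleteEdges F) ≠ distNum G}

set_option linter.unusedVariables false

/-! ### Auxiliary machinery -/

def distSet {V : Type*} (G : SimpleGraph V) : Set ℕ :=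
  {d : ℕ | ∃ f : V → Fin d, ∀ φ : G ≃g G, (∀ x, f (φ x) = f x) → ∀ x, φ x = x}

lemma distNum_def {V : Type*} (G : SimpleGraph V) : distNum G = sInf (distSet G) := rfl

lemma distSet_mono {V : Type*} (G : SimpleGraph V) {d e : ℕ} (hde : d ≤ e)
    (hd : d ∈ distSet G) : e ∈ distSet G := by
  obtain ⟨f, hf⟩ := hd
  refine ⟨fun x => Fin.castLE hde (f x), fun φ hφ => hf φ fun x => ?_⟩
  have := hφ x
  exact Fin.castLE_injective hde this

lemma mem_distSet_of_labeling {V : Type*} (G : SimpleGraph V) {L : Type*} [Fintype L]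
    [DecidableEq L] {d : ℕ} (hcard : Fintype.card L = d) (f : V → L)
    (hf : ∀ φ : G ≃g G, (∀ x, f (φ x) = f x) → ∀ x, φ x = x) : d ∈ distSet G := by
  obtain e := Fintype.equivFinOfCardEq hcard
  refine ⟨fun x => e (f x), fun φ hφ => hf φ fun x => e.injective (hφ x)⟩

lemma distNum_eq_of {V : Type*} (G : SimpleGraph V) {d : ℕ} (h1 : d ∈ distSet G)
    (h2 : d - 1 ∉ distSet G) (hd : 1 ≤ d) : distNum G = d := by
  rw [distNum_def]
  refine le_antisymm (Nat.sInf_le h1) ?_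
  by_contra hlt
  push_neg at hlt
  have hmem := Nat.sInf_mem ⟨d, h1⟩
  exact h2 (distSet_mono G (by omega) hmem)

def cliqueGraph {V C : Type*} (c : V → C) : SimpleGraph V where
  Adj x y := x ≠ y ∧ c x = c y
  symm := ⟨fun _ _ ⟨h1, h2⟩ => ⟨h1.symm, h2.symm⟩⟩
  loopless := ⟨fun _ ⟨h1, _⟩ => h1 rfl⟩

/-- An automorphism of `cliqueGraph c` from a permutation commuting with `c` up to a
permutation of colors. -/
def cliqueAut {V C : Type*} (c : V → C) (e : Equiv.Perm V) (σ : C → C)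
    (h : ∀ x, c (e x) = σ (c x)) (hσ : Function.Injective σ) :
    cliqueGraph c ≃g cliqueGraph c where
  toEquiv := e
  map_rel_iff' := by
    intro x y
    show (e x ≠ e y ∧ c (e x) = c (e y)) ↔ (x ≠ y ∧ c x = c y)
    rw [h, h]
    constructor
    · rintro ⟨h1, h2⟩; exact ⟨fun hh => h1 (by rw [hh]), hσ h2⟩
    · rintro ⟨h1, h2⟩; exact ⟨fun hh => h1 (e.injective hh), by rw [h2]⟩

lemma cliqueAut_apply {V C : Type*} (c : V → C) (e : Equiv.Perm V) (σ : C → C)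
    (h : ∀ x, c (e x) = σ (c x)) (hσ : Function.Injective σ) (x : V) :
    (cliqueAut c e σ h hσ) x = e x := rfl

lemma swap_not_dist {V C L : Type*} [DecidableEq V] (c : V → C) (f : V → L) {x y : V}
    (hxy : x ≠ y) (hc : c x = c y) (hf : f x = f y) :
    ¬ (∀ φ : cliqueGraph c ≃g cliqueGraph c, (∀ z, f (φ z) = f z) → ∀ z, φ z = z) := by
  intro hall
  have hcs : ∀ z, c (Equiv.swap x y z) = c z := by
    intro z
    rcases eq_or_ne z x with rfl | hzx
    · rw [Equiv.swap_apply_left]; exact hc.symm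
    rcases eq_or_ne z y with rfl | hzy
    · rw [Equiv.swap_apply_right]; exact hc
    · rw [Equiv.swap_apply_of_ne_of_ne hzx hzy]
  have hfs : ∀ z, f (Equiv.swap x y z) = f z := by
    intro z
    rcases eq_or_ne z x with rfl | hzx
    · rw [Equiv.swap_apply_left]; exact hf.symm
    rcases eq_or_ne z y with rfl | hzy
    · rw [Equiv.swap_apply_right]; exact hf
    · rw [Equiv.swap_apply_of_ne_of_ne hzx hzy]
  have := hall (cliqueAut c (Equiv.swap x y) id hcs Function.injective_id) hfs x
  simp only [cliqueAut] at this
  rw [show ((⟨Equiv.swap x y, _⟩ : cliqueGraph c ≃g cliqueGraph c) x) = Equiv.swap x y x from rfl,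
    Equiv.swap_apply_left] at this
  exact hxy this.symm

lemma not_mem_distSet_big_fiber {V C : Type*} [Finite V] (c : V → C) {a : C} {d : ℕ}
    (h : d < Nat.card {x : V // c x = a}) : d ∉ distSet (cliqueGraph c) := by
  classical
  cases nonempty_fintype V
  rintro ⟨f, hf⟩
  have hcard : Fintype.card (Fin d) < Fintype.card {x : V // c x = a} := by
    simpa [Nat.card_eq_fintype_card] using h
  obtain ⟨x, y, hxy, hfxy⟩ :=
    Fintype.exists_ne_map_eq_of_card_lt (fun x : {x : V // c x = a} => f x.val) hcard
  exact swap_not_dist c f (fun hh => hxy (Subtype.ext hh)) (x.2.trans y.2.symm) hfxy hf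

lemma not_mem_distSet_two_fibers {V C : Type*} [Finite V] (c : V → C) {a b : C}
    (hab : a ≠ b) {d : ℕ} (hd : 0 < d) (ha : d ≤ Nat.card {x : V // c x = a})
    (hb : d ≤ Nat.card {x : V // c x = b}) : d ∉ distSet (cliqueGraph c) := by
  classical
  cases nonempty_fintype V
  rintro ⟨f, hf⟩
  by_cases hcol : ∃ x y : V, x ≠ y ∧ c x = c y ∧ f x = f y
  · obtain ⟨x, y, h1, h2, h3⟩ := hcol
    exact swap_not_dist c f h1 h2 h3 hf
  push_neg at hcol
  have hinj : ∀ x y : V, c x = c y → f x = f y → x = y := by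
    intro x y h1 h2
    by_contra hne
    exact (hcol x y hne h1) h2
  -- injective restrictions
  have hinjA : Function.Injective (fun x : {x : V // c x = a} => f x.val) := by
    intro x y hxy; exact Subtype.ext (hinj _ _ (x.2.trans y.2.symm) hxy)
  have hinjB : Function.Injective (fun x : {x : V // c x = b} => f x.val) := by
    intro x y hxy; exact Subtype.ext (hinj _ _ (x.2.trans y.2.symm) hxy)
  have hcA : Fintype.card {x : V // c x = a} = d := by
    have := Fintype.card_le_of_injective _ hinjA
    simp only [Fintype.card_fin] at this
    rw [Nat.card_eq_fintype_card] at ha; omega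
  have hcB : Fintype.card {x : V // c x = b} = d := by
    have := Fintype.card_le_of_injective _ hinjB
    simp only [Fintype.card_fin] at this
    rw [Nat.card_eq_fintype_card] at hb; omega
  have hbijA : Function.Bijective (fun x : {x : V // c x = a} => f x.val) :=
    (Fintype.bijective_iff_injective_and_card _).2 ⟨hinjA, by simp [hcA]⟩
  have hbijB : Function.Bijective (fun x : {x : V // c x = b} => f x.val) :=
    (Fintype.bijective_iff_injective_and_card _).2 ⟨hinjB, by simp [hcB]⟩
  set eA := Equiv.ofBijective _ hbijA with heA
  set eB := Equiv.ofBijective _ hbijB with heB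
  set e : {x : V // c x = a} ≃ {x : V // c x = b} := eA.trans eB.symm with he
  set g : V → V := fun x =>
    if h : c x = a then (e ⟨x, h⟩).val
    else if h' : c x = b then (e.symm ⟨x, h'⟩).val else x with hg
  have hgA : ∀ (x : V) (h : c x = a), g x = (e ⟨x, h⟩).val := by
    intro x h; simp only [hg, dif_pos h]
  have hgB : ∀ (x : V) (h : c x = b), g x = (e.symm ⟨x, h⟩).val := by
    intro x h
    have hna : ¬ (c x = a) := fun hh => hab (hh.symm.trans h)
    simp only [hg, dif_neg hna, dif_pos h]
  have hgO : ∀ (x : V), c x ≠ a → c x ≠ b → g x = x := by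
    intro x h1 h2; simp only [hg, dif_neg h1, dif_neg h2]
  have hinv : Function.Involutive g := by
    intro x
    by_cases h : c x = a
    · rw [hgA x h, hgB _ (e ⟨x, h⟩).2, Subtype.coe_eta, Equiv.symm_apply_apply]
    by_cases h' : c x = b
    · rw [hgB x h', hgA _ (e.symm ⟨x, h'⟩).2, Subtype.coe_eta, Equiv.apply_symm_apply]
    · rw [hgO x h h', hgO x h h']
  have hcg : ∀ x, c (g x) = Equiv.swap a b (c x) := by
    intro x
    by_cases h : c x = a
    · rw [hgA x h, (e ⟨x, h⟩).2, h, Equiv.swap_apply_left]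
    by_cases h' : c x = b
    · rw [hgB x h', (e.symm ⟨x, h'⟩).2, h', Equiv.swap_apply_right]
    · rw [hgO x h h', Equiv.swap_apply_of_ne_of_ne h h']
  have hfg : ∀ x, f (g x) = f x := by
    intro x
    by_cases h : c x = a
    · rw [hgA x h]
      have : f (e ⟨x, h⟩).val = eB (e ⟨x, h⟩) := rfl
      rw [this, he, Equiv.trans_apply, Equiv.apply_symm_apply]
      rfl
    by_cases h' : c x = b
    · rw [hgB x h']
      have : f (e.symm ⟨x, h'⟩).val = eA (e.symm ⟨x, h'⟩) := rfl
      rw [this, he]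
      show eA (eA.symm (eB.symm.symm ⟨x, h'⟩)) = f x
      rw [Equiv.apply_symm_apply]
      rfl
    · rw [hgO x h h']
  have hA : Nonempty {x : V // c x = a} := by
    rw [← Fintype.card_pos_iff, hcA]; exact hd
  obtain ⟨x₀⟩ := hA
  have hmove : g x₀.val ≠ x₀.val := by
    intro heq
    have h1 : c (g x₀.val) = b := by rw [hgA x₀.val x₀.2, (e _).2]
    rw [heq] at h1
    exact hab (x₀.2.symm.trans h1)
  have := hf (cliqueAut c (hinv.toPerm g) (Equiv.swap a b) hcg (Equiv.injective _)) ?_ x₀.val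
  · change g x₀.val = x₀.val at this
    exact hmove this
  · intro z; change f (g z) = f z; exact hfg z

/-- A labeling injective on color classes, whose label sets distinguish distinct
(nonempty) color classes, is a distinguishing labeling of `cliqueGraph c`. -/
lemma cliqueGraph_distinguishing {V C L : Type*} (c : V → C) (f : V → L)
    (hinj : ∀ x y : V, c x = c y → f x = f y → x = y)
    (hsec : ∀ a : C, ∃ x : V, c x = a)
    (hsets : ∀ a b : C, f '' {x | c x = a} = f '' {x | c x = b} → a = b) :
    ∀ φ : cliqueGraph c ≃g cliqueGraph c, (∀ x, f (φ x) = f x) → ∀ x, φ x = x := by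
  intro φ hφ
  have key : ∀ x y : V, c x = c y ↔ c (φ x) = c (φ y) := by
    intro x y
    rcases eq_or_ne x y with rfl | hxy
    · simp
    · have h1 := φ.map_rel_iff' (a := x) (b := y)
      have h2 : (cliqueGraph c).Adj (φ x) (φ y) ↔ (cliqueGraph c).Adj x y := h1
      show c x = c y ↔ _
      have hne : φ x ≠ φ y := fun hh => hxy (φ.toEquiv.injective hh)
      constructor
      · intro h; exact (h2.2 ⟨hxy, h⟩).2
      · intro h; exact (h2.1 ⟨hne, h⟩).2
  classical
  choose σ hσ using hsec
  set ψ : C → C := fun a => c (φ (σ a)) with hψdef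
  have hψ : ∀ x : V, c (φ x) = ψ (c x) := by
    intro x
    exact (key x (σ (c x))).1 (hσ (c x)).symm
  have hψinj : Function.Injective ψ := by
    intro a b hab
    have := (key (σ a) (σ b)).2 hab
    rw [hσ a, hσ b] at this; exact this
  have himg : ∀ a : C, φ '' {x | c x = a} = {x | c x = ψ a} := by
    intro a
    apply Set.eq_of_subset_of_subset
    · rintro y ⟨x, hx, rfl⟩
      show c (φ x) = ψ a
      rw [hψ x, hx]
    · rintro y hy
      obtain ⟨x, rfl⟩ := φ.toEquiv.surjective y
      refine ⟨x, ?_, rfl⟩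
      have : ψ (c x) = ψ a := by rw [← hψ x]; exact hy
      exact hψinj this
  have hψid : ∀ a : C, ψ a = a := by
    intro a
    apply hsets
    rw [← himg a]
    ext l
    constructor
    · rintro ⟨y, ⟨x, hx, rfl⟩, rfl⟩
      exact ⟨x, hx, (hφ x).symm⟩
    · rintro ⟨x, hx, rfl⟩
      exact ⟨φ x, ⟨x, hx, rfl⟩, hφ x⟩
  intro x
  apply hinj
  · rw [hψ x, hψid]
  · exact hφ x

lemma zmod_cast_inj {M : ℕ} [NeZero M] {u v : ℕ} (hu : u < M) (hv : v < M)
    (h : (u : ZMod M) = v) : u = v := by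
  rw [← ZMod.val_cast_of_lt hu, ← ZMod.val_cast_of_lt hv, h]

/-- Cyclic interval in `ZMod M` starting at `t` of length `s`. -/
def cIv (M : ℕ) (t : ZMod M) (s : ℕ) : Finset (ZMod M) :=
  (Finset.range s).image (fun r : ℕ => t + (r : ZMod M))

lemma cIv_injOn {M : ℕ} [NeZero M] (t : ZMod M) {s : ℕ} (hs : s ≤ M) :
    Set.InjOn (fun r : ℕ => t + (r : ZMod M)) (Finset.range s) := by
  intro r hr r' hr' h
  simp only [Finset.coe_range, Set.mem_Iio] at hr hr'
  have : (r : ZMod M) = r' := by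
    have := add_left_cancel h
    exact this
  exact zmod_cast_inj (lt_of_lt_of_le hr hs) (lt_of_lt_of_le hr' hs) this

lemma cIv_card {M : ℕ} [NeZero M] (t : ZMod M) {s : ℕ} (hs : s ≤ M) :
    (cIv M t s).card = s := by
  rw [cIv, Finset.card_image_of_injOn (cIv_injOn t hs), Finset.card_range]

lemma cIv_start_inj {M : ℕ} [NeZero M] {t t' : ZMod M} {s : ℕ} (h0 : 0 < s) (hsM : s < M)
    (h : cIv M t s = cIv M t' s) : t = t' := by
  have ht' : t' ∈ cIv M t s := by
    rw [h, cIv, Finset.mem_image]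
    exact ⟨0, by simpa using h0, by simp⟩
  rw [cIv, Finset.mem_image] at ht'
  obtain ⟨r, hr, hteq⟩ := ht'
  rw [Finset.mem_range] at hr
  rcases Nat.eq_zero_or_pos r with rfl | hrpos
  · simpa using hteq
  · exfalso
    have hmem : t + (s : ZMod M) ∈ cIv M t' s := by
      rw [cIv, Finset.mem_image]
      refine ⟨s - r, by rw [Finset.mem_range]; omega, ?_⟩
      rw [← hteq, add_assoc, ← Nat.cast_add]
      congr 2
      omega
    rw [← h, cIv, Finset.mem_image] at hmem
    obtain ⟨r', hr', h2⟩ := hmem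
    rw [Finset.mem_range] at hr'
    have : (r' : ZMod M) = (s : ZMod M) := add_left_cancel h2
    have := zmod_cast_inj (by omega) hsM this
    omega

lemma cIv_def (M : ℕ) (t : ZMod M) (s : ℕ) :
    cIv M t s = (Finset.range s).image (fun r : ℕ => t + (r : ZMod M)) := rfl

attribute [irreducible] cIv

lemma zmod_cast_inj' {M : ℕ} [NeZero M] {u v : ℕ} (hu : 0 < u) (hu' : u ≤ M)
    (hv : 0 < v) (hv' : v ≤ M) (h : (u : ZMod M) = v) : u = v := by
  have hM : 0 < M := Nat.pos_of_ne_zero (NeZero.ne M)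
  by_cases h1 : u = M
  · by_cases h2 : v = M
    · omega
    · exfalso
      have h0 : ((0 : ℕ) : ZMod M) = (v : ZMod M) := by
        have h' : ((u : ℕ) : ZMod M) = 0 := by rw [h1]; exact ZMod.natCast_self M
        rw [Nat.cast_zero, ← h']; exact h
      have := zmod_cast_inj hM (by omega) h0
      omega
  · by_cases h2 : v = M
    · exfalso
      have h0 : ((0 : ℕ) : ZMod M) = (u : ZMod M) := by
        have h' : ((v : ℕ) : ZMod M) = 0 := by rw [h2]; exact ZMod.natCast_self M
        rw [Nat.cast_zero, ← h']; exact h.symm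
      have := zmod_cast_inj hM (by omega) h0
      omega
    · exact zmod_cast_inj (by omega) (by omega) h

lemma cyclic_mem_distSet {W : Type*} [Finite W] {n M : ℕ} [NeZero M] (c : W → Fin n)
    (hn : n ≤ M)
    (hpos : ∀ a, 0 < Nat.card {x : W // c x = a})
    (hle : ∀ a, Nat.card {x : W // c x = a} ≤ M)
    (hlt : ∀ a b, a ≠ b → Nat.card {x : W // c x = a} = Nat.card {x : W // c x = b} →
      Nat.card {x : W // c x = a} < M) :
    M ∈ distSet (cliqueGraph c) := by
  classical
  cases nonempty_fintype W
  set ι : W ≃ Fin (Fintype.card W) := Fintype.equivFin W with hι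
  set fib : Fin n → Finset W := fun a => Finset.univ.filter (fun x => c x = a) with hfib
  set m : Fin n → ℕ := fun a => (fib a).card with hm
  have hnat : ∀ a, Nat.card {x : W // c x = a} = m a := by
    intro a
    rw [Nat.card_eq_fintype_card, Fintype.card_subtype]
  set rank : W → ℕ := fun x => ((fib (c x)).filter (fun y => ι y < ι x)).card with hrank
  have hmemfib : ∀ x : W, x ∈ fib (c x) := fun x => by simp [hfib]
  have rank_lt : ∀ x : W, rank x < m (c x) := by
    intro x
    have hsub : (fib (c x)).filter (fun y => ι y < ι x) ⊆ (fib (c x)).erase x := by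
      intro z hz
      rw [Finset.mem_filter] at hz
      rw [Finset.mem_erase]
      exact ⟨fun hh => by simp [hh] at hz, hz.1⟩
    have := Finset.card_le_card hsub
    have h2 := Finset.card_erase_of_mem (hmemfib x)
    have h3 : 0 < m (c x) := Finset.card_pos.2 ⟨x, hmemfib x⟩
    have h4 : m (c x) = (fib (c x)).card := rfl
    simp only [hrank]
    omega
  have rank_mono : ∀ x y : W, c x = c y → ι x < ι y → rank x < rank y := by
    intro x y hc hxy
    apply Finset.card_lt_card
    rw [Finset.ssubset_iff_of_subset]
    · refine ⟨x, ?_, ?_⟩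
      · rw [Finset.mem_filter]; exact ⟨by rw [← hc]; exact hmemfib x, hxy⟩
      · rw [Finset.mem_filter]; push_neg; intro _; exact le_refl _
    · intro z hz
      rw [Finset.mem_filter] at hz ⊢
      rw [hc] at hz
      exact ⟨hz.1, hz.2.trans hxy⟩
  have rank_inj : ∀ x y : W, c x = c y → rank x = rank y → x = y := by
    intro x y hc hr
    rcases lt_trichotomy (ι x) (ι y) with h | h | h
    · exact absurd hr (Nat.ne_of_lt (rank_mono x y hc h))
    · exact ι.injective h
    · exact absurd hr.symm (Nat.ne_of_lt (rank_mono y x hc.symm h))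
  have rank_image : ∀ a : Fin n, (fib a).image rank = Finset.range (m a) := by
    intro a
    apply Finset.eq_of_subset_of_card_le
    · intro r hr
      rw [Finset.mem_image] at hr
      obtain ⟨x, hx, rfl⟩ := hr
      have hcx : c x = a := by simpa [hfib] using hx
      rw [Finset.mem_range, ← hcx]
      exact rank_lt x
    · rw [Finset.card_range, Finset.card_image_of_injOn, hm]
      intro x hx y hy hr
      have hcx : c x = a := by simpa [hfib] using hx
      have hcy : c y = a := by simpa [hfib] using hy
      exact rank_inj x y (hcx.trans hcy.symm) hr
  set f : W → ZMod M := fun x => (((c x).val + 1 : ℕ) : ZMod M) + (rank x : ZMod M)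
    with hf
  have hstart : ∀ a b : Fin n,
      (((a : Fin n).val + 1 : ℕ) : ZMod M) = ((b.val + 1 : ℕ) : ZMod M) → a = b := by
    intro a b h
    have := zmod_cast_inj' (by omega) (by have := a.isLt; omega)
      (by omega) (by have := b.isLt; omega) h
    exact Fin.ext (by omega)
  have himg : ∀ a : Fin n, f '' {x | c x = a} = ↑(cIv M ((a.val + 1 : ℕ) : ZMod M) (m a)) := by
    intro a
    ext l
    simp only [Set.mem_image, Set.mem_setOf_eq, Finset.coe_sort_coe, Finset.mem_coe,
      cIv_def, Finset.mem_image, Finset.mem_range]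
    constructor
    · rintro ⟨x, hcx, rfl⟩
      refine ⟨rank x, by rw [← hcx]; exact rank_lt x, ?_⟩
      rw [hf]; simp only [hcx]
    · rintro ⟨r, hr, rfl⟩
      have : r ∈ (fib a).image rank := by rw [rank_image a, Finset.mem_range]; exact hr
      rw [Finset.mem_image] at this
      obtain ⟨x, hx, rfl⟩ := this
      have hcx : c x = a := by simpa [hfib] using hx
      exact ⟨x, hcx, by rw [hf]; simp only [hcx]⟩
  have key := cliqueGraph_distinguishing c f
    (by -- hinj
      intro x y hc hfxy
      rw [hf] at hfxy
      simp only [hc] at hfxy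
      have hr : (rank x : ZMod M) = (rank y : ZMod M) := add_left_cancel hfxy
      have h1 : rank x < M := lt_of_lt_of_le (rank_lt x) (by rw [← hnat]; exact hle _)
      have h2 : rank y < M := lt_of_lt_of_le (rank_lt y) (by rw [← hnat]; exact hle _)
      exact rank_inj x y hc (zmod_cast_inj h1 h2 hr))
    (by -- hsec
      intro a
      have := hpos a
      rw [hnat] at this
      obtain ⟨x, hx⟩ := Finset.card_pos.1 this
      exact ⟨x, by simpa [hfib] using hx⟩)
    (by -- hsets
      intro a b hab
      rw [himg a, himg b, Finset.coe_inj] at hab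
      have hma : m a ≤ M := by rw [← hnat]; exact hle a
      have hmb : m b ≤ M := by rw [← hnat]; exact hle b
      have hcards : m a = m b := by
        rw [← cIv_card (((a.val + 1 : ℕ) : ZMod M)) hma,
          ← cIv_card (((b.val + 1 : ℕ) : ZMod M)) hmb, hab]
      by_contra hne
      have hltM : m a < M := by
        have := hlt a b hne (by rw [hnat, hnat]; exact hcards)
        rwa [hnat] at this
      rw [hcards] at hab
      have h0 : 0 < m b := by rw [← hnat]; exact hpos b
      exact hne (hstart a b (cIv_start_inj h0 (hcards ▸ hltM) hab))
      )
  exact mem_distSet_of_labeling _ (ZMod.card M) f key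

section Assembly

variable {k : ℕ}

local notation "Vk" => (Fin (k+1) × Fin (k+1))

/-- The induced subgraph of a clique graph is a clique graph. -/
lemma induce_cliqueGraph (S : Set Vk) :
    (cliqueGraph (Prod.fst : Vk → Fin (k+1))).induce Sᶜ
      = cliqueGraph (fun x : ↥Sᶜ => (x : Vk).1) := by
  ext x y
  show (cliqueGraph _).Adj (x : Vk) (y : Vk) ↔ _
  show ((x : Vk) ≠ (y : Vk) ∧ _) ↔ (x ≠ y ∧ _)
  rw [Subtype.coe_ne_coe]

/-- Fibers of the induced coloring, counted in the base. -/
lemma fiber_card_eq (S : Set Vk) (a : Fin (k+1)) :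
    Nat.card {x : ↥Sᶜ // (x : Vk).1 = a} = Nat.card {j : Fin (k+1) // (a, j) ∉ S} := by
  apply Nat.card_congr
  refine ⟨fun x => ⟨(x.val : Vk).2, by
      obtain ⟨⟨⟨a', j⟩, hmem⟩, rfl⟩ := x
      exact hmem⟩,
    fun j => ⟨⟨(a, j.val), j.2⟩, rfl⟩, ?_, ?_⟩
  · rintro ⟨⟨⟨a', j⟩, hmem⟩, rfl⟩
    rfl
  · rintro ⟨j, hj⟩
    rfl

lemma fiber_ge (S : Set Vk) (a : Fin (k+1)) :
    k + 1 - S.ncard ≤ Nat.card {j : Fin (k+1) // (a, j) ∉ S} := by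
  classical
  have h1 : Nat.card {j : Fin (k+1) // (a, j) ∈ S} ≤ S.ncard := by
    rw [← Nat.card_coe_set_eq]
    exact Nat.card_le_card_of_injective
      (fun j => (⟨(a, j.val), j.2⟩ : S))
      (fun j j' h => Subtype.ext (by
        have := congrArg (fun z : S => (z : Vk).2) h
        exact this))
  have h2 : Nat.card {j : Fin (k+1) // (a, j) ∉ S}
      = Fintype.card (Fin (k+1)) - Nat.card {j : Fin (k+1) // (a, j) ∈ S} := by
    rw [Nat.card_eq_fintype_card, Nat.card_eq_fintype_card, Fintype.card_subtype_compl]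
  rw [h2, Fintype.card_fin]
  omega

lemma fiber_le (S : Set Vk) (a : Fin (k+1)) :
    Nat.card {j : Fin (k+1) // (a, j) ∉ S} ≤ k + 1 := by
  classical
  rw [Nat.card_eq_fintype_card]
  calc Fintype.card {j : Fin (k+1) // (a, j) ∉ S} ≤ Fintype.card (Fin (k+1)) :=
      Fintype.card_subtype_le _
    _ = k + 1 := Fintype.card_fin _

/-- If at most `k-1` vertices are removed, two classes remain untouched. -/
lemma two_full_fibers (S : Set Vk) (hS : S.ncard ≤ k - 1) (hk : 1 ≤ k) :
    ∃ a b : Fin (k+1), a ≠ b ∧ (∀ j, (a, j) ∉ S) ∧ (∀ j, (b, j) ∉ S) := by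
  classical
  set damaged : Finset (Fin (k+1)) :=
    Finset.univ.filter (fun a => ∃ j, (a, j) ∈ S) with hdam
  have hfin : S.Finite := Set.toFinite S
  set g : Fin (k+1) → Fin (k+1) :=
    fun a => if h : ∃ j, (a, j) ∈ S then h.choose else 0 with hg
  have hcard : damaged.card ≤ S.ncard := by
    rw [Set.ncard_eq_toFinset_card S hfin]
    refine Finset.card_le_card_of_injOn (fun a => ((a, g a) : Vk)) ?_ ?_
    · intro a ha
      rw [hdam, Finset.mem_coe, Finset.mem_filter] at ha
      rw [Finset.mem_coe, Set.Finite.mem_toFinset]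
      simp only [hg, dif_pos ha.2]
      exact ha.2.choose_spec
    · intro a _ b _ hab
      exact congrArg Prod.fst hab
  set full : Finset (Fin (k+1)) :=
    Finset.univ.filter (fun a => ∀ j, (a, j) ∉ S) with hfull
  have hcompl : ∀ a : Fin (k+1), a ∈ full ↔ a ∉ damaged := by
    intro a
    rw [hfull, hdam, Finset.mem_filter, Finset.mem_filter]
    simp only [Finset.mem_univ, true_and]
    push_neg
    rfl
  have hsum : full.card + damaged.card = k + 1 := by
    have : full = damagedᶜ := by
      ext a; rw [hcompl a, Finset.mem_compl]
    rw [this, Finset.card_compl, Fintype.card_fin]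
    have h3 : damaged.card ≤ Finset.univ.card := Finset.card_le_card (Finset.subset_univ _)
    rw [Finset.card_univ, Fintype.card_fin] at h3
    omega
  have h2 : 1 < full.card := by omega
  obtain ⟨a, ha, b, hb, hab⟩ := Finset.one_lt_card.1 h2
  rw [hfull, Finset.mem_filter] at ha hb
  exact ⟨a, b, hab, ha.2, hb.2⟩

lemma base_fiber (a : Fin (k+1)) :
    Nat.card {x : Vk // x.1 = a} = k + 1 := by
  have : Nat.card {x : Vk // x.1 = a} = Nat.card (Fin (k+1)) := by
    apply Nat.card_congr
    refine ⟨fun x => x.val.2, fun j => ⟨(a, j), rfl⟩, ?_, fun j => rfl⟩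
    rintro ⟨⟨a', j⟩, rfl⟩
    rfl
  rw [this, Nat.card_eq_fintype_card, Fintype.card_fin]

lemma distNum_base (hk : 1 ≤ k) :
    distNum (cliqueGraph (Prod.fst : Vk → Fin (k+1))) = k + 2 := by
  apply distNum_eq_of
  · apply cyclic_mem_distSet
    · omega
    · intro a; rw [base_fiber]; omega
    · intro a; rw [base_fiber]; omega
    · intro a b _ _; rw [base_fiber]; omega
  · have h1 : k + 2 - 1 = k + 1 := rfl
    rw [h1]
    refine not_mem_distSet_two_fibers _ (a := ⟨0, by omega⟩) (b := ⟨1, by omega⟩)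
      (by simp [Fin.ext_iff]) (by omega) ?_ ?_
    · rw [base_fiber]
    · rw [base_fiber]
  · omega

lemma full_fiber_card (S : Set Vk) {a : Fin (k+1)} (h : ∀ j, (a, j) ∉ S) :
    Nat.card {j : Fin (k+1) // (a, j) ∉ S} = k + 1 := by
  have : Nat.card {j : Fin (k+1) // (a, j) ∉ S} = Nat.card (Fin (k+1)) :=
    Nat.card_congr (Equiv.subtypeUnivEquiv h)
  rw [this, Nat.card_eq_fintype_card, Fintype.card_fin]

lemma distNum_small (S : Set Vk) (hS : S.ncard ≤ k - 1) (hk : 1 ≤ k) :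
    distNum ((cliqueGraph (Prod.fst : Vk → Fin (k+1))).induce Sᶜ) = k + 2 := by
  rw [induce_cliqueGraph]
  apply distNum_eq_of
  · apply cyclic_mem_distSet
    · omega
    · intro a
      rw [fiber_card_eq]
      have := fiber_ge S a
      omega
    · intro a
      rw [fiber_card_eq]
      have := fiber_le S a
      omega
    · intro a b _ _
      rw [fiber_card_eq]
      have := fiber_le S a
      omega
  · have h1 : k + 2 - 1 = k + 1 := rfl
    rw [h1]
    obtain ⟨a, b, hab, ha, hb⟩ := two_full_fibers S hS hk
    refine not_mem_distSet_two_fibers _ hab (by omega) ?_ ?_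
    · rw [fiber_card_eq, full_fiber_card S ha]
    · rw [fiber_card_eq, full_fiber_card S hb]
  · omega

/-- The special `k`-element vertex subset: one vertex from each of the first `k` cliques. -/
def S0 (k : ℕ) : Set (Fin (k+1) × Fin (k+1)) :=
  {x | x.2 = 0 ∧ x.1 ≠ Fin.last k}

lemma S0_ne_univ : S0 k ≠ Set.univ := by
  intro heq
  have : ((Fin.last k, 0) : Vk) ∈ S0 k := heq.symm ▸ Set.mem_univ _
  exact this.2 rfl

lemma card_ne_subtype (i₀ : Fin (k+1)) : Nat.card {i : Fin (k+1) // i ≠ i₀} = k := by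
  rw [Nat.card_eq_fintype_card]
  have h2 : Fintype.card {i : Fin (k+1) // i ≠ i₀} =
      Fintype.card (Fin (k+1)) - Fintype.card {i : Fin (k+1) // i = i₀} :=
    Fintype.card_subtype_compl _
  rw [Fintype.card_fin, Fintype.card_subtype_eq] at h2
  omega

lemma S0_ncard : (S0 k).ncard = k := by
  rw [← Nat.card_coe_set_eq]
  have : Nat.card (S0 k) = Nat.card {i : Fin (k+1) // i ≠ Fin.last k} := by
    apply Nat.card_congr
    refine ⟨fun x => ⟨x.val.1, x.2.2⟩, fun i => ⟨(i.val, 0), rfl, i.2⟩, ?_, fun i => rfl⟩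
    rintro ⟨⟨a, j⟩, hj, ha⟩
    have : j = 0 := hj
    subst this
    rfl
  rw [this, card_ne_subtype]

lemma S0_fiber (a : Fin (k+1)) :
    Nat.card {j : Fin (k+1) // (a, j) ∉ S0 k} =
      if a = Fin.last k then k + 1 else k := by
  by_cases h : a = Fin.last k
  · rw [if_pos h]
    apply full_fiber_card
    intro j hj
    exact hj.2 h
  · rw [if_neg h]
    have : Nat.card {j : Fin (k+1) // (a, j) ∉ S0 k} =
        Nat.card {j : Fin (k+1) // j ≠ 0} := by
      apply Nat.card_congr
      apply Equiv.subtypeEquivRight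
      intro j
      show ¬ (j = 0 ∧ a ≠ Fin.last k) ↔ j ≠ 0
      constructor
      · intro hn hj; exact hn ⟨hj, h⟩
      · intro hj hn; exact hj hn.1
    rw [this, card_ne_subtype]

lemma distNum_S0 (hk : 1 ≤ k) :
    distNum ((cliqueGraph (Prod.fst : Vk → Fin (k+1))).induce (S0 k)ᶜ) = k + 1 := by
  rw [induce_cliqueGraph]
  apply distNum_eq_of
  · apply cyclic_mem_distSet
    · omega
    · intro a
      rw [fiber_card_eq, S0_fiber]
      split <;> omega
    · intro a
      rw [fiber_card_eq, S0_fiber]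
      split <;> omega
    · intro a b hab
      rw [fiber_card_eq, fiber_card_eq, S0_fiber, S0_fiber]
      by_cases ha : a = Fin.last k
      · subst ha
        rw [if_pos rfl, if_neg (fun hb => hab hb.symm)]
        omega
      · rw [if_neg ha]
        intro _
        omega
  · have h1 : k + 1 - 1 = k := rfl
    rw [h1]
    apply not_mem_distSet_big_fiber (a := Fin.last k)
    rw [fiber_card_eq, S0_fiber, if_pos rfl]
    omega
  · omega

end Assembly

/-- Every positive integer is the distinguishing stability of some graph. -/
theorem exists_graph_stD_eq (k : ℕ) (hk : 1 ≤ k) :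
    ∃ (V : Type) (_ : Finite V) (G : SimpleGraph V), 2 ≤ Nat.card V ∧ stD G = k := by
  refine ⟨Fin (k+1) × Fin (k+1), inferInstance,
    cliqueGraph (Prod.fst : Fin (k+1) × Fin (k+1) → Fin (k+1)), ?_, ?_⟩
  · rw [Nat.card_eq_fintype_card, Fintype.card_prod, Fintype.card_fin]
    have : 2 * 1 ≤ (k + 1) * (k + 1) := Nat.mul_le_mul (by omega) (by omega)
    omega
  · have hdef : stD (cliqueGraph (Prod.fst : Fin (k+1) × Fin (k+1) → Fin (k+1))) =
        sInf {m : ℕ | ∃ S : Set (Fin (k+1) × Fin (k+1)), S ≠ Set.univ ∧ S.ncard = m ∧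
          distNum ((cliqueGraph (Prod.fst : Fin (k+1) × Fin (k+1) → Fin (k+1))).induce Sᶜ)
            ≠ distNum (cliqueGraph (Prod.fst : Fin (k+1) × Fin (k+1) → Fin (k+1)))} := rfl
    rw [hdef]
    have hkmem : k ∈ {m : ℕ | ∃ S : Set (Fin (k+1) × Fin (k+1)), S ≠ Set.univ ∧
        S.ncard = m ∧
        distNum ((cliqueGraph (Prod.fst : Fin (k+1) × Fin (k+1) → Fin (k+1))).induce Sᶜ)
          ≠ distNum (cliqueGraph (Prod.fst : Fin (k+1) × Fin (k+1) → Fin (k+1)))} := by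
      refine ⟨S0 k, S0_ne_univ, S0_ncard, ?_⟩
      rw [distNum_S0 hk, distNum_base hk]
      omega
    apply le_antisymm (Nat.sInf_le hkmem)
    apply le_csInf ⟨k, hkmem⟩
    rintro m ⟨S, _, hSc, hne⟩
    by_contra hlt
    push_neg at hlt
    exact hne (by
      rw [distNum_small S (by omega) hk, distNum_base hk])
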